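/- For every open subset x of J_n, the transitive closure cl(x) is also open. Dually, for every closed subset x of J_n, the interior int(x) (the largest open subset of x) is closed. -/

import Mathlib

/-- `J_n = {(i,j) : 1 ≤ i < j ≤ n}`. -/
def JnS (n : ℕ) : Set (ℕ × ℕ) := {p | 1 ≤ p.1 ∧ p.1 < p.2 ∧ p.2 ≤ n}

/-- Transitivity of a set of pairs, viewed as a binary relation. -/
def TransSet (x : Set (ℕ × ℕ)) : Prop := ∀ i j k : ℕ, (i, j) ∈ x → (j, k) ∈ x → (i, k) ∈ x

/-- A subset of `J_n` is closed if it is transitive. -/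
def ClosedIn (n : ℕ) (x : Set (ℕ × ℕ)) : Prop := x ⊆ JnS n ∧ TransSet x

/-- A subset of `J_n` is open if its complement in `J_n` is closed. -/
def OpenIn (n : ℕ) (x : Set (ℕ × ℕ)) : Prop := x ⊆ JnS n ∧ ClosedIn n (JnS n \ x)

/-- The transitive closure of a set of pairs. -/
def clS (x : Set (ℕ × ℕ)) : Set (ℕ × ℕ) :=
  {p | Relation.TransGen (fun a b => (a, b) ∈ x) p.1 p.2}

lemma mem_clS {x : Set (ℕ × ℕ)} {i k : ℕ} :
    (i, k) ∈ clS x ↔ Relation.TransGen (fun a b => (a, b) ∈ x) i k := Iff.rfl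

lemma subset_clS (x : Set (ℕ × ℕ)) : x ⊆ clS x := by
  rintro ⟨i, k⟩ h
  exact Relation.TransGen.single h

lemma clS_subset_Jn {n : ℕ} {x : Set (ℕ × ℕ)} (h : x ⊆ JnS n) : clS x ⊆ JnS n := by
  rintro ⟨i, k⟩ hik
  rw [mem_clS] at hik
  induction hik with
  | single h' => exact h h'
  | tail _ h2 ih =>
      have h3 := h h2
      exact ⟨ih.1, lt_trans ih.2.1 h3.2.1, h3.2.2⟩

lemma clS_subset_of_trans {x : Set (ℕ × ℕ)} (h : TransSet x) : clS x ⊆ x := by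
  rintro ⟨i, k⟩ hik
  rw [mem_clS] at hik
  induction hik with
  | single h' => exact h'
  | tail _ h2 ih => exact h _ _ _ ih h2

lemma transSet_clS (x : Set (ℕ × ℕ)) : TransSet (clS x) := by
  intro i j k h1 h2
  exact Relation.TransGen.trans h1 h2

lemma chain_split {n : ℕ} {x : Set (ℕ × ℕ)} (hx : x ⊆ JnS n) (ht : TransSet (JnS n \ x))
    {i k : ℕ} (h : Relation.TransGen (fun a b => (a, b) ∈ x) i k) :
    ∀ j, i < j → j < k → (i, j) ∈ clS x ∨ (j, k) ∈ clS x := by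
  induction h with
  | @single c h' =>
      intro j hij hjk
      have hik := hx h'
      have hij' : (i, j) ∈ JnS n := ⟨hik.1, hij, le_trans (le_of_lt hjk) hik.2.2⟩
      have hjk' : (j, c) ∈ JnS n := ⟨le_trans hik.1 (le_of_lt hij), hjk, hik.2.2⟩
      by_cases h1 : (i, j) ∈ x
      · exact Or.inl (subset_clS x h1)
      · by_cases h2 : (j, c) ∈ x
        · exact Or.inr (subset_clS x h2)
        · exact absurd (ht i j c ⟨hij', h1⟩ ⟨hjk', h2⟩).2 (by simp [h'])
  | @tail b c hib hbc ih =>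
      intro j hij hjk
      have hbc' := hx hbc
      rcases lt_trichotomy j b with hjb | hjb | hjb
      · rcases ih j hij hjb with h1 | h1
        · exact Or.inl h1
        · exact Or.inr (Relation.TransGen.tail h1 hbc)
      · subst hjb
        exact Or.inl hib
      · have h1 : (b, j) ∈ JnS n := ⟨hbc'.1, hjb, le_trans (le_of_lt hjk) hbc'.2.2⟩
        have h2 : (j, c) ∈ JnS n := ⟨le_trans hbc'.1 (le_of_lt hjb), hjk, hbc'.2.2⟩
        by_cases hb1 : (b, j) ∈ x
        · exact Or.inl (Relation.TransGen.tail hib hb1)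
        · by_cases hb2 : (j, c) ∈ x
          · exact Or.inr (subset_clS x hb2)
          · exact absurd (ht b j c ⟨h1, hb1⟩ ⟨h2, hb2⟩).2 (by simp [hbc])

lemma key {n : ℕ} {x : Set (ℕ × ℕ)} (hx : x ⊆ JnS n) (ht : TransSet (JnS n \ x)) :
    TransSet (JnS n \ clS x) := by
  intro i j k hij hjk
  refine ⟨⟨hij.1.1, lt_trans hij.1.2.1 hjk.1.2.1, hjk.1.2.2⟩, ?_⟩
  intro h
  rw [mem_clS] at h
  rcases chain_split hx ht h j hij.1.2.1 hjk.1.2.1 with h1 | h1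
  · exact hij.2 h1
  · exact hjk.2 h1

/-- For every open subset `x` of `J_n`, the transitive closure `cl x` is open; dually,
for every closed subset `x` of `J_n`, the interior `int x` (the largest open subset
of `x`) exists and is closed. -/
theorem stmt1 (n : ℕ) (x : Set (ℕ × ℕ)) :
    (OpenIn n x → OpenIn n (clS x)) ∧
    (ClosedIn n x →
      ∃ i : Set (ℕ × ℕ), IsGreatest {y | OpenIn n y ∧ y ⊆ x} i ∧ ClosedIn n i) := by
  constructor
  · rintro ⟨hx, _, ht⟩
    exact ⟨clS_subset_Jn hx, Set.diff_subset, key hx ht⟩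
  · rintro ⟨hx, ht⟩
    set y := JnS n \ x with hy
    set i := JnS n \ clS y with hi
    have hyJ : y ⊆ JnS n := Set.diff_subset
    have hyc : JnS n \ y = x := Set.diff_diff_cancel_left hx
    have hclyJ : clS y ⊆ JnS n := clS_subset_Jn hyJ
    have hti : TransSet i := key hyJ (by rw [hyc]; exact ht)
    have hiJ : i ⊆ JnS n := Set.diff_subset
    refine ⟨i, ⟨⟨⟨hiJ, ?_⟩, ?_⟩, ?_⟩, hiJ, hti⟩
    · -- JnS n \ i is closed
      have : JnS n \ i = clS y := by
        rw [hi, Set.diff_diff_cancel_left hclyJ]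
      rw [this]
      exact ⟨hclyJ, transSet_clS y⟩
    · -- i ⊆ x
      intro p hp
      by_contra hpx
      exact hp.2 (subset_clS y ⟨hp.1, hpx⟩)
    · -- upper bound
      rintro z ⟨⟨hzJ, _, hzt⟩, hzx⟩ p hp
      refine ⟨hzJ hp, fun hcl => ?_⟩
      have h1 : y ⊆ JnS n \ z := fun q hq => ⟨hq.1, fun hqz => hq.2 (hzx hqz)⟩
      have h2 : clS y ⊆ clS (JnS n \ z) := by
        rintro ⟨a, b⟩ hab
        exact Relation.TransGen.mono (fun a b h => h1 h) a b hab
      have h3 := clS_subset_of_trans hzt (h2 hcl)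
      exact h3.2 hp
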